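/- Lemma 2.7 (estimate of I₃ for q ∈ (1,2]). Let n ≥ 1, q ∈ (1,2], s ∈ (0,1), κ ∈ [0,1), 1 ≤ ρ₁ < ρ₂ ≤ 2, an integer m ≥ 3, m₁ > 0 and H > 0. Set ρ̃ = (ρ₂ − ρ₁)/4 and ψ(x) = ((|x|² − ρ₁²)₊)^m. Let u : ℝⁿ → ℝ be measurable with |u(x) − u(y)| ≤ H|x − y|^κ for all x, y in the closed ball B̄_{ρ₂}(0). Let x̄ ∈ B_{(ρ₁+ρ₂)/2}(0) and ȳ ∈ B_{(3ρ₂+ρ₁)/4}(0) with ā := x̄ − ȳ satisfying 0 < |ā| < ρ̃/2, and assume (i) u(x̄+z) − u(ȳ+z) − m₁ψ(x̄+z) ≤ u(x̄) − u(ȳ) − m₁ψ(x̄) for all z ∈ ℝⁿ, and (ii) m₁ψ(x̄) ≤ u(x̄) − u(ȳ). Let ε₁ ∈ (0, 1/8), η = ε₁|ā|, and let D ⊆ B_{ρ̃}(0) \ B_η(0) be measurable. Then there is a constant κ* > 0, depending only on n, q, s, κ, m, m₁ and H (and not on ε₁, |ā| or D), such that ∫_D (J_q(u(x̄) − u(x̄+z))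 − J_q(u(ȳ) − u(ȳ+z))) |z|^{−(n+sq)} dz ≥ −κ* ( ∫_η^{ρ̃} r^{2(q−1)−sq−1} dr + |ā|^{κ(q−1)(m−1)/m} ∫_η^{ρ̃} r^{q−sq−2} dr ). -/

import Mathlib

open MeasureTheory Metric Filter

noncomputable section

/-- `J_q(t) = |t|^{q-2} t`. -/
def Jq (q t : ℝ) : ℝ := |t| ^ (q - 2) * t

/-- The localization function `ψ(x) = ((|x|² − ρ₁²)₊)^m`. -/
def locPsi (n : ℕ) (ρ₁ : ℝ) (m : ℕ) (x : EuclideanSpace ℝ (Fin n)) : ℝ :=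
  (max (‖x‖ ^ 2 - ρ₁ ^ 2) 0) ^ m

section Aux

variable {q t a b : ℝ}

lemma Jq_of_nonneg (hq : 1 < q) (ht : 0 ≤ t) : Jq q t = t ^ (q - 1) := by
  rcases eq_or_lt_of_le ht with h | h
  · simp [Jq, ← h, Real.zero_rpow (by linarith : q - 1 ≠ 0)]
  · rw [Jq, abs_of_pos h, show q - 1 = q - 2 + 1 by ring, Real.rpow_add_one h.ne']

lemma Jq_of_nonpos (hq : 1 < q) (ht : t ≤ 0) : Jq q t = -(-t) ^ (q - 1) := by
  have h : Jq q t = -Jq q (-t) := by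
    simp only [Jq, abs_neg]; ring
  rw [h, Jq_of_nonneg hq (by linarith)]

lemma Jq_mono (hq : 1 < q) : Monotone (Jq q) := by
  intro a b hab
  rcases le_or_gt 0 a with ha | ha
  · rw [Jq_of_nonneg hq ha, Jq_of_nonneg hq (ha.trans hab)]
    exact Real.rpow_le_rpow ha hab (by linarith)
  rcases le_or_gt 0 b with hb | hb
  · rw [Jq_of_nonpos hq ha.le, Jq_of_nonneg hq hb]
    have h1 : (0:ℝ) ≤ (-a) ^ (q-1) := Real.rpow_nonneg (by linarith) _
    have h2 : (0:ℝ) ≤ b ^ (q-1) := Real.rpow_nonneg hb _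
    linarith
  · rw [Jq_of_nonpos hq ha.le, Jq_of_nonpos hq hb.le]
    have := Real.rpow_le_rpow (by linarith : (0:ℝ) ≤ -b) (by linarith : -b ≤ -a)
      (by linarith : (0:ℝ) ≤ q-1)
    linarith

lemma rpow_add_le (ha : 0 ≤ a) (hb : 0 ≤ b) {p : ℝ} (hp0 : 0 ≤ p) (hp1 : p ≤ 1) :
    (a + b) ^ p ≤ a ^ p + b ^ p := by
  have := NNReal.rpow_add_le_add_rpow a.toNNReal b.toNNReal hp0 hp1
  have h := NNReal.coe_le_coe.2 this
  push_cast at h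
  rwa [Real.coe_toNNReal _ ha, Real.coe_toNNReal _ hb] at h

lemma Jq_sub_le (hq : 1 < q) (hq2 : q ≤ 2) (hab : a ≤ b) :
    Jq q b - Jq q a ≤ 2 * (b - a) ^ (q - 1) := by
  have hp0 : (0:ℝ) ≤ q - 1 := by linarith
  have hp1 : q - 1 ≤ 1 := by linarith
  have hba : 0 ≤ b - a := by linarith
  rcases le_or_gt 0 a with ha | ha
  · rw [Jq_of_nonneg hq ha, Jq_of_nonneg hq (ha.trans hab)]
    have h1 : b ^ (q-1) ≤ (b-a) ^ (q-1) + a ^ (q-1) := by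
      have := rpow_add_le hba ha hp0 hp1
      rwa [sub_add_cancel] at this
    have h2 : (0:ℝ) ≤ (b-a)^(q-1) := Real.rpow_nonneg hba _
    linarith
  rcases le_or_gt 0 b with hb | hb
  · rw [Jq_of_nonpos hq ha.le, Jq_of_nonneg hq hb]
    have h1 : b ^ (q-1) ≤ (b-a) ^ (q-1) := Real.rpow_le_rpow hb (by linarith) hp0
    have h2 : (-a) ^ (q-1) ≤ (b-a) ^ (q-1) := Real.rpow_le_rpow (by linarith) (by linarith) hp0
    linarith
  · rw [Jq_of_nonpos hq ha.le, Jq_of_nonpos hq hb.le]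
    have h1 : (-a) ^ (q-1) ≤ (b-a) ^ (q-1) + (-b) ^ (q-1) := by
      have := rpow_add_le hba (by linarith : (0:ℝ) ≤ -b) hp0 hp1
      rwa [show b - a + -b = -a by ring] at this
    have h2 : (0:ℝ) ≤ (b-a)^(q-1) := Real.rpow_nonneg hba _
    linarith

lemma Jq_sub_ge (hq : 1 < q) (hq2 : q ≤ 2) {δ : ℝ} (h : b - δ ≤ a) :
    -(2 * |δ| ^ (q - 1)) ≤ Jq q a - Jq q b := by
  have h1 : Jq q (b - δ) ≤ Jq q a := Jq_mono hq h
  have h2 : Jq q b - Jq q (b - δ) ≤ 2 * |δ| ^ (q-1) := by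
    rcases le_or_gt (b - δ) b with hle | hlt
    · have := Jq_sub_le hq hq2 hle
      rw [show b - (b - δ) = δ by ring] at this
      rwa [abs_of_nonneg (by linarith : (0:ℝ) ≤ δ)]
    · have h3 : Jq q b ≤ Jq q (b - δ) := Jq_mono hq hlt.le
      have : (0:ℝ) ≤ 2 * |δ|^(q-1) := by positivity
      linarith
  linarith

lemma Jq_abs (hq : 1 < q) : |Jq q t| = |t| ^ (q - 1) := by
  rcases le_or_gt 0 t with ht | ht
  · rw [Jq_of_nonneg hq ht, abs_of_nonneg (Real.rpow_nonneg ht _), abs_of_nonneg ht]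
  · rw [Jq_of_nonpos hq ht.le, abs_neg, abs_of_nonneg (Real.rpow_nonneg (by linarith) _),
      abs_of_neg ht]

lemma abs_pow_sub_pow_le' (m : ℕ) {a b c : ℝ} (ha : 0 ≤ a) (hb : 0 ≤ b)
    (hac : a ≤ c) (hbc : b ≤ c) : |a ^ m - b ^ m| ≤ m * c ^ (m - 1) * |a - b| := by
  induction m with
  | zero => simp
  | succ k ih =>
    have hc : 0 ≤ c := ha.trans hac
    have key : a ^ (k+1) - b ^ (k+1) = a * (a ^ k - b ^ k) + b ^ k * (a - b) := by ring
    calc |a ^ (k+1) - b ^ (k+1)| ≤ |a * (a ^ k - b ^ k)| + |b ^ k * (a - b)| := by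
          rw [key]; exact abs_add_le _ _
      _ = a * |a ^ k - b ^ k| + b ^ k * |a - b| := by
          rw [abs_mul, abs_mul, abs_of_nonneg ha, abs_of_nonneg (pow_nonneg hb k)]
      _ ≤ c * (k * c ^ (k-1) * |a - b|) + c ^ k * |a - b| := by
          gcongr
      _ ≤ (k+1 : ℕ) * c ^ ((k+1) - 1) * |a - b| := by
          rcases Nat.eq_zero_or_pos k with rfl | hk
          · simp
          · have heq : c * (k * c ^ (k-1) * |a-b|) = k * (c * c^(k-1)) * |a-b| := by ring
            rw [heq, ← pow_succ' c (k-1), Nat.sub_add_cancel hk]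
            push_cast
            nlinarith [abs_nonneg (a-b), pow_nonneg hc k]

lemma psi_diff (n : ℕ) (ρ₁ : ℝ) (m : ℕ) {x z : EuclideanSpace ℝ (Fin n)}
    (hx : ‖x‖ ≤ 2) (hz : ‖z‖ ≤ 1) :
    |locPsi n ρ₁ m (x + z) - locPsi n ρ₁ m x| ≤
      m * (max (‖x‖ ^ 2 - ρ₁ ^ 2) 0 + 5 * ‖z‖) ^ (m - 1) * (5 * ‖z‖) := by
  set w := max (‖x‖ ^ 2 - ρ₁ ^ 2) 0 with hw
  set w' := max (‖x + z‖ ^ 2 - ρ₁ ^ 2) 0 with hw'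
  have hz0 : (0:ℝ) ≤ ‖z‖ := norm_nonneg z
  have hdiff : |w' - w| ≤ 5 * ‖z‖ := by
    refine (abs_max_sub_max_le_abs _ _ _).trans ?_
    have h1 : ‖x + z‖ ^ 2 - ρ₁ ^ 2 - (‖x‖ ^ 2 - ρ₁ ^ 2)
        = (‖x + z‖ - ‖x‖) * (‖x + z‖ + ‖x‖) := by ring
    rw [h1, abs_mul]
    have h2 : |‖x + z‖ - ‖x‖| ≤ ‖z‖ := by
      have := abs_norm_sub_norm_le (x + z) x
      simpa using this
    have h3 : |‖x + z‖ + ‖x‖| ≤ 5 := by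
      have h4 : ‖x + z‖ ≤ 3 := (norm_add_le x z).trans (by linarith)
      rw [abs_of_nonneg (by positivity)]
      linarith
    calc |‖x+z‖ - ‖x‖| * |‖x+z‖ + ‖x‖| ≤ ‖z‖ * 5 :=
          mul_le_mul h2 h3 (abs_nonneg _) hz0
      _ = 5 * ‖z‖ := by ring
  have hw0 : 0 ≤ w := le_max_right _ _
  have hw'0 : 0 ≤ w' := le_max_right _ _
  have hwc : w ≤ w + 5 * ‖z‖ := by linarith
  have hw'c : w' ≤ w + 5 * ‖z‖ := by
    have h5 := le_abs_self (w' - w)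
    linarith
  have := abs_pow_sub_pow_le' m hw'0 hw0 hw'c hwc
  calc |locPsi n ρ₁ m (x + z) - locPsi n ρ₁ m x| = |w' ^ m - w ^ m| := rfl
    _ ≤ m * (w + 5 * ‖z‖) ^ (m - 1) * |w' - w| := this
    _ ≤ m * (w + 5 * ‖z‖) ^ (m - 1) * (5 * ‖z‖) := by gcongr

lemma add_pow_le2 {x y : ℝ} (hx : 0 ≤ x) (hy : 0 ≤ y) (k : ℕ) :
    (x + y) ^ k ≤ 2 ^ k * (x ^ k + y ^ k) := by
  have h1 : x + y ≤ 2 * max x y := by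
    have := le_max_left x y; have := le_max_right x y; linarith
  have h2 : (x + y) ^ k ≤ (2 * max x y) ^ k :=
    pow_le_pow_left₀ (by linarith) h1 k
  have h3 : (max x y) ^ k ≤ x ^ k + y ^ k := by
    rcases max_cases x y with ⟨hm, _⟩ | ⟨hm, _⟩ <;> rw [hm] <;>
      [linarith [pow_nonneg hy k]; linarith [pow_nonneg hx k]]
  calc (x + y) ^ k ≤ (2 * max x y) ^ k := h2
    _ = 2 ^ k * (max x y) ^ k := mul_pow 2 _ k
    _ ≤ 2 ^ k * (x ^ k + y ^ k) := by
        have : (0:ℝ) ≤ 2 ^ k := by positivity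
        nlinarith

lemma rpow_anti_base {A x e : ℝ} (hA : 0 < A) (hAx : A ≤ x) (he : e ≤ 0) :
    x ^ e ≤ A ^ e := by
  have hx : 0 < x := lt_of_lt_of_le hA hAx
  have h1 : x ^ e = A ^ e * (x / A) ^ e := by
    rw [← Real.mul_rpow hA.le (by positivity), mul_div_cancel₀ _ hA.ne']
  rw [h1]
  have h2 : (x / A) ^ e ≤ 1 :=
    Real.rpow_le_one_of_one_le_of_nonpos ((one_le_div hA).2 hAx) he
  have h3 : (0:ℝ) ≤ A ^ e := (Real.rpow_pos_of_pos hA e).le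
  nlinarith

end Aux
set_option maxHeartbeats 1600000 in
/-- **Lemma 2.7** (estimate of `I₃` for `q ∈ (1,2]`). -/
theorem I3_estimate_q_le_two
    (n : ℕ) (hn : 1 ≤ n) (q s κ : ℝ) (m : ℕ) (m₁ H : ℝ)
    (hq : q ∈ Set.Ioc (1 : ℝ) 2) (hs : s ∈ Set.Ioo (0 : ℝ) 1) (hκ : κ ∈ Set.Ico (0 : ℝ) 1)
    (hm : 3 ≤ m) (hm₁ : 0 < m₁) (hH : 0 < H) :
    ∃ κs > (0 : ℝ), ∀ ρ₁ ρ₂ : ℝ, 1 ≤ ρ₁ → ρ₁ < ρ₂ → ρ₂ ≤ 2 →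
      ∀ u : EuclideanSpace ℝ (Fin n) → ℝ, Measurable u →
      (∀ x ∈ closedBall (0 : EuclideanSpace ℝ (Fin n)) ρ₂,
        ∀ y ∈ closedBall (0 : EuclideanSpace ℝ (Fin n)) ρ₂,
          |u x - u y| ≤ H * ‖x - y‖ ^ κ) →
      ∀ xbar ∈ ball (0 : EuclideanSpace ℝ (Fin n)) ((ρ₁ + ρ₂) / 2),
      ∀ ybar ∈ ball (0 : EuclideanSpace ℝ (Fin n)) ((3 * ρ₂ + ρ₁) / 4),
        xbar - ybar ≠ 0 → ‖xbar - ybar‖ < (ρ₂ - ρ₁) / 8 →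
        (∀ z : EuclideanSpace ℝ (Fin n),
          u (xbar + z) - u (ybar + z) - m₁ * locPsi n ρ₁ m (xbar + z) ≤
            u xbar - u ybar - m₁ * locPsi n ρ₁ m xbar) →
        m₁ * locPsi n ρ₁ m xbar ≤ u xbar - u ybar →
        ∀ ε₁ ∈ Set.Ioo (0 : ℝ) (1 / 8),
        ∀ D : Set (EuclideanSpace ℝ (Fin n)), MeasurableSet D →
          D ⊆ ball (0 : EuclideanSpace ℝ (Fin n)) ((ρ₂ - ρ₁) / 4) \
                ball (0 : EuclideanSpace ℝ (Fin n)) (ε₁ * ‖xbar - ybar‖) →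
          IntegrableOn (fun z =>
              (Jq q (u xbar - u (xbar + z)) - Jq q (u ybar - u (ybar + z))) /
                ‖z‖ ^ ((n : ℝ) + s * q)) D ∧
          -(κs * ((∫ r in (ε₁ * ‖xbar - ybar‖)..((ρ₂ - ρ₁) / 4),
                r ^ (2 * (q - 1) - s * q - 1)) +
              ‖xbar - ybar‖ ^ (κ * (q - 1) * ((m : ℝ) - 1) / (m : ℝ)) *
                ∫ r in (ε₁ * ‖xbar - ybar‖)..((ρ₂ - ρ₁) / 4),
                  r ^ (q - s * q - 2)))
            ≤ ∫ z in D,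
                (Jq q (u xbar - u (xbar + z)) - Jq q (u ybar - u (ybar + z))) /
                  ‖z‖ ^ ((n : ℝ) + s * q) := by
  obtain ⟨hq1, hq2⟩ := hq
  obtain ⟨hs0, hs1⟩ := hs
  obtain ⟨hκ0, hκ1⟩ := hκ
  obtain ⟨k, rfl⟩ : ∃ k, m = k + 1 := ⟨m - 1, (Nat.succ_pred_eq_of_pos (by omega)).symm⟩
  have hq10 : (0:ℝ) ≤ q - 1 := by linarith
  have hq11 : q - 1 ≤ 1 := by linarith
  have hmR : (3:ℝ) ≤ ((k+1:ℕ):ℝ) := by exact_mod_cast hm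
  have hmR0 : (0:ℝ) < ((k+1:ℕ):ℝ) := by positivity
  have hnR : (1:ℝ) ≤ (n:ℝ) := by exact_mod_cast hn
  set K₁ : ℝ := (H / m₁) ^ ((k:ℝ) / ((k+1:ℕ):ℝ)) with hK₁def
  set A₁ : ℝ := m₁ * (((k+1:ℕ):ℝ) * 2 ^ k * 5) * K₁ with hA₁def
  set A₂ : ℝ := m₁ * (((k+1:ℕ):ℝ) * 2 ^ k * 5 ^ (k+1)) with hA₂def
  have hA₁0 : 0 ≤ A₁ := by
    rw [hA₁def, hK₁def]
    exact mul_nonneg (mul_nonneg hm₁.le (by positivity))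
      (Real.rpow_nonneg (div_nonneg hH.le hm₁.le) _)
  have hA₂0 : 0 ≤ A₂ := by
    rw [hA₂def]; exact mul_nonneg hm₁.le (by positivity)
  set cdim : ℝ := n * (volume (ball (0 : EuclideanSpace ℝ (Fin n)) 1)).toReal with hcdimdef
  have hcdim0 : 0 ≤ cdim := by
    rw [hcdimdef]
    exact mul_nonneg (Nat.cast_nonneg n) ENNReal.toReal_nonneg
  have hrp1 : 0 ≤ A₁ ^ (q-1) := Real.rpow_nonneg hA₁0 _
  have hrp2 : 0 ≤ A₂ ^ (q-1) := Real.rpow_nonneg hA₂0 _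
  set κs : ℝ := 1 + cdim * (2 * A₁ ^ (q-1) + 2 * A₂ ^ (q-1)) with hκsdef
  have hκs0 : 0 < κs := by
    rw [hκsdef]
    have h0 : (0:ℝ) ≤ cdim * (2 * A₁ ^ (q-1) + 2 * A₂ ^ (q-1)) :=
      mul_nonneg hcdim0 (by linarith only [hrp1, hrp2])
    linarith only [h0]
  refine ⟨κs, hκs0, ?_⟩
  intro ρ₁ ρ₂ hρ₁ hρ12 hρ₂ u hu hHol xbar hxb ybar hyb hne hdist hcomp hpsi ε₁ hε₁ D hD hDsub
  obtain ⟨hε₁0, hε₁8⟩ := hε₁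
  set na : ℝ := ‖xbar - ybar‖ with hnadef
  have hna0 : 0 < na := by rw [hnadef]; exact norm_pos_iff.2 hne
  set ρt : ℝ := (ρ₂ - ρ₁) / 4 with hρtdef
  set η : ℝ := ε₁ * na with hηdef
  have hρt0 : 0 < ρt := by rw [hρtdef]; linarith
  have hρt14 : ρt ≤ 1/4 := by rw [hρtdef]; linarith
  have hη0 : 0 < η := by rw [hηdef]; exact mul_pos hε₁0 hna0
  have hηρt : η < ρt := by
    rw [hηdef, hρtdef]
    have h0 : ε₁ * na < 1/8 * na := mul_lt_mul_of_pos_right hε₁8 hna0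
    linarith only [h0, hdist, hna0]
  have hxn : ‖xbar‖ < (ρ₁ + ρ₂)/2 := mem_ball_zero_iff.1 hxb
  have hyn : ‖ybar‖ < (3*ρ₂ + ρ₁)/4 := mem_ball_zero_iff.1 hyb
  have hx2 : ‖xbar‖ ≤ 2 := by linarith
  have hxcb : xbar ∈ closedBall (0 : EuclideanSpace ℝ (Fin n)) ρ₂ := by
    rw [mem_closedBall_zero_iff]; linarith
  have hycb : ybar ∈ closedBall (0 : EuclideanSpace ℝ (Fin n)) ρ₂ := by
    rw [mem_closedBall_zero_iff]; linarith
  -- bound on w = (‖xbar‖² - ρ₁²)₊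
  set w : ℝ := max (‖xbar‖ ^ 2 - ρ₁ ^ 2) 0 with hwdef
  have hw0 : 0 ≤ w := le_max_right _ _
  have hUxy : u xbar - u ybar ≤ H * na ^ κ :=
    (le_abs_self _).trans (hHol xbar hxcb ybar hycb)
  have hpsix : locPsi n ρ₁ (k+1) xbar = w ^ (k+1) := rfl
  have hwm : w ^ (k+1) ≤ (H / m₁) * na ^ κ := by
    rw [div_mul_eq_mul_div, le_div_iff₀ hm₁]
    have h6 : m₁ * locPsi n ρ₁ (k+1) xbar ≤ H * na ^ κ := hpsi.trans hUxy
    rw [hpsix] at h6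
    exact le_of_eq_of_le (mul_comm _ _) h6
  set P : ℝ := (H / m₁) * na ^ κ with hPdef
  have hP0 : 0 ≤ P := by
    rw [hPdef]
    exact mul_nonneg (div_nonneg hH.le hm₁.le) (Real.rpow_nonneg hna0.le _)
  have hwle : w ≤ P ^ (((k+1:ℕ):ℝ)⁻¹) := by
    have h2 := Real.rpow_le_rpow (pow_nonneg hw0 _) hwm
      (by positivity : (0:ℝ) ≤ (((k+1:ℕ):ℝ))⁻¹)
    rwa [← Real.rpow_natCast w (k+1), ← Real.rpow_mul hw0,
      mul_inv_cancel₀ hmR0.ne', Real.rpow_one] at h2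
  set β : ℝ := κ * (((k+1:ℕ):ℝ) - 1) / ((k+1:ℕ):ℝ) with hβdef
  have hwk : w ^ k ≤ K₁ * na ^ β := by
    have h3 : w ^ k ≤ (P ^ (((k+1:ℕ):ℝ)⁻¹)) ^ k := pow_le_pow_left₀ hw0 hwle k
    have h4 : (P ^ (((k+1:ℕ):ℝ)⁻¹)) ^ k = P ^ ((k:ℝ) / ((k+1:ℕ):ℝ)) := by
      rw [← Real.rpow_natCast (P ^ (((k+1:ℕ):ℝ)⁻¹)) k, ← Real.rpow_mul hP0,
        inv_mul_eq_div]
    have h5 : P ^ ((k:ℝ) / ((k+1:ℕ):ℝ)) = K₁ * na ^ β := by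
      rw [hPdef, Real.mul_rpow (div_nonneg hH.le hm₁.le) (Real.rpow_nonneg hna0.le κ),
        ← Real.rpow_mul hna0.le, hK₁def, hβdef]
      congr 1
      push_cast
      ring
    rw [h4, h5] at h3
    exact h3
  -- abbreviations
  set βq : ℝ := κ * (q - 1) * (((k+1:ℕ):ℝ) - 1) / ((k+1:ℕ):ℝ) with hβqdef
  set e₁ : ℝ := (q-1) - ((n:ℝ) + s*q) with he₁def
  set e₂ : ℝ := ((k+1:ℕ):ℝ)*(q-1) - ((n:ℝ) + s*q) with he₂def
  set c₁ : ℝ := 2 * A₁ ^ (q-1) * na ^ βq with hc₁def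
  set c₂ : ℝ := 2 * A₂ ^ (q-1) with hc₂def
  have hbq0 : 0 ≤ na ^ βq := Real.rpow_nonneg hna0.le _
  have hc₁0 : 0 ≤ c₁ := by
    rw [hc₁def]; exact mul_nonneg (mul_nonneg (by norm_num) hrp1) hbq0
  have hc₂0 : 0 ≤ c₂ := by
    rw [hc₂def]; exact mul_nonneg (by norm_num) hrp2
  set hfun : EuclideanSpace ℝ (Fin n) → ℝ :=
    fun z => c₁ * ‖z‖ ^ e₁ + c₂ * ‖z‖ ^ e₂ with hfundef
  set g : EuclideanSpace ℝ (Fin n) → ℝ := fun z =>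
    (Jq q (u xbar - u (xbar + z)) - Jq q (u ybar - u (ybar + z))) /
      ‖z‖ ^ ((n : ℝ) + s * q) with hgdef
  have hzfacts : ∀ z ∈ D, η ≤ ‖z‖ ∧ ‖z‖ < ρt := by
    intro z hz
    obtain ⟨hz1, hz2⟩ := hDsub hz
    exact ⟨le_of_not_gt fun hlt => hz2 (mem_ball_zero_iff.2 hlt), mem_ball_zero_iff.1 hz1⟩
  -- pointwise bounds
  have hpoint : ∀ z ∈ D, -(hfun z) ≤ g z ∧ |g z| ≤ 2 * H ^ (q-1) / η ^ ((n:ℝ) + s*q) := by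
    intro z hz
    obtain ⟨hzη, hzρ⟩ := hzfacts z hz
    have hz0 : (0:ℝ) < ‖z‖ := lt_of_lt_of_le hη0 hzη
    have hz1 : ‖z‖ ≤ 1 := by linarith
    have hρteq : ρt = (ρ₂ - ρ₁)/4 := hρtdef
    have hxz : xbar + z ∈ closedBall (0 : EuclideanSpace ℝ (Fin n)) ρ₂ := by
      rw [mem_closedBall_zero_iff]
      have := norm_add_le xbar z
      linarith
    have hyz : ybar + z ∈ closedBall (0 : EuclideanSpace ℝ (Fin n)) ρ₂ := by
      rw [mem_closedBall_zero_iff]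
      have := norm_add_le ybar z
      linarith
    have hba : (u ybar - u (ybar + z)) -
        m₁ * (locPsi n ρ₁ (k+1) (xbar + z) - locPsi n ρ₁ (k+1) xbar) ≤
        u xbar - u (xbar + z) := by
      have h0 := hcomp z
      have hexp : m₁ * (locPsi n ρ₁ (k+1) (xbar + z) - locPsi n ρ₁ (k+1) xbar)
          = m₁ * locPsi n ρ₁ (k+1) (xbar + z) - m₁ * locPsi n ρ₁ (k+1) xbar :=
        mul_sub _ _ _
      linarith [h0, hexp]
    have hJ := Jq_sub_ge hq1 hq2 hba
    -- bound on |δ|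
    have hΔ : |m₁ * (locPsi n ρ₁ (k+1) (xbar + z) - locPsi n ρ₁ (k+1) xbar)| ≤
        A₁ * na ^ β * ‖z‖ + A₂ * ‖z‖ ^ (k+1) := by
      have h1 := psi_diff n ρ₁ (k+1) hx2 hz1
      simp only [Nat.add_sub_cancel] at h1
      have h2 : (w + 5*‖z‖) ^ k ≤ 2^k * (w^k + (5*‖z‖)^k) :=
        add_pow_le2 hw0 (by positivity) k
      have h3 : |locPsi n ρ₁ (k+1) (xbar + z) - locPsi n ρ₁ (k+1) xbar|
          ≤ (((k+1:ℕ):ℝ)) * (2^k * (w^k + (5*‖z‖)^k)) * (5*‖z‖) := by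
        refine h1.trans ?_
        gcongr
      have h4 : |m₁ * (locPsi n ρ₁ (k+1) (xbar + z) - locPsi n ρ₁ (k+1) xbar)| =
          m₁ * |locPsi n ρ₁ (k+1) (xbar + z) - locPsi n ρ₁ (k+1) xbar| := by
        rw [abs_mul, abs_of_pos hm₁]
      rw [h4]
      calc m₁ * |locPsi n ρ₁ (k+1) (xbar + z) - locPsi n ρ₁ (k+1) xbar|
          ≤ m₁ * ((((k+1:ℕ):ℝ)) * (2^k * (w^k + (5*‖z‖)^k)) * (5*‖z‖)) := by
            exact mul_le_mul_of_nonneg_left h3 hm₁.le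
        _ = (m₁ * (((k+1:ℕ):ℝ) * 2^k * 5)) * (w^k * ‖z‖) + A₂ * ‖z‖^(k+1) := by
            rw [hA₂def]; ring
        _ ≤ (m₁ * (((k+1:ℕ):ℝ) * 2^k * 5)) * ((K₁ * na^β) * ‖z‖) + A₂ * ‖z‖^(k+1) := by
            have h5 : w ^ k * ‖z‖ ≤ (K₁ * na ^ β) * ‖z‖ :=
              mul_le_mul_of_nonneg_right hwk hz0.le
            have h6 : (0:ℝ) ≤ m₁ * (((k+1:ℕ):ℝ) * 2^k * 5) :=
              mul_nonneg hm₁.le (by positivity)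
            exact add_le_add (mul_le_mul_of_nonneg_left h5 h6) le_rfl
        _ = A₁ * na^β * ‖z‖ + A₂ * ‖z‖^(k+1) := by rw [hA₁def]; ring
    have hδq : 2 * |m₁ * (locPsi n ρ₁ (k+1) (xbar + z) - locPsi n ρ₁ (k+1) xbar)| ^ (q-1)
        ≤ c₁ * ‖z‖ ^ (q-1) + c₂ * ‖z‖ ^ (((k+1:ℕ):ℝ)*(q-1)) := by
      have hS₁0 : 0 ≤ A₁ * na ^ β * ‖z‖ :=
        mul_nonneg (mul_nonneg hA₁0 (Real.rpow_nonneg hna0.le β)) hz0.le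
      have hS₂0 : 0 ≤ A₂ * ‖z‖^(k+1) := mul_nonneg hA₂0 (pow_nonneg hz0.le _)
      have h6 : |m₁ * (locPsi n ρ₁ (k+1) (xbar + z) - locPsi n ρ₁ (k+1) xbar)| ^ (q-1)
          ≤ (A₁ * na^β*‖z‖ + A₂*‖z‖^(k+1)) ^ (q-1) :=
        Real.rpow_le_rpow (abs_nonneg _) hΔ hq10
      have h7 := rpow_add_le hS₁0 hS₂0 hq10 hq11
      have h8 : (A₁ * na^β * ‖z‖) ^ (q-1) = A₁^(q-1) * na^βq * ‖z‖^(q-1) := by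
        rw [Real.mul_rpow (mul_nonneg hA₁0 (Real.rpow_nonneg hna0.le β)) hz0.le,
          Real.mul_rpow hA₁0 (Real.rpow_nonneg hna0.le β),
          ← Real.rpow_mul hna0.le, hβqdef, hβdef]
        congr 3
        ring
      have h9 : (A₂ * ‖z‖^(k+1)) ^ (q-1) = A₂^(q-1) * ‖z‖^(((k+1:ℕ):ℝ)*(q-1)) := by
        rw [Real.mul_rpow hA₂0 (pow_nonneg hz0.le _), ← Real.rpow_natCast ‖z‖ (k+1),
          ← Real.rpow_mul (norm_nonneg z)]
      rw [hc₁def, hc₂def]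
      linarith only [h6, h7, h8, h9]
    constructor
    · -- lower bound
      have hpow0 : (0:ℝ) < ‖z‖ ^ ((n:ℝ) + s*q) := Real.rpow_pos_of_pos hz0 _
      have hgz : g z = (Jq q (u xbar - u (xbar + z)) - Jq q (u ybar - u (ybar + z))) /
          ‖z‖ ^ ((n:ℝ)+s*q) := rfl
      have hz_e1 : ‖z‖ ^ e₁ * ‖z‖ ^ ((n:ℝ)+s*q) = ‖z‖ ^ (q-1) := by
        rw [← Real.rpow_add hz0, he₁def, sub_add_cancel]
      have hz_e2 : ‖z‖ ^ e₂ * ‖z‖ ^ ((n:ℝ)+s*q) = ‖z‖ ^ (((k+1:ℕ):ℝ)*(q-1)) := by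
        rw [← Real.rpow_add hz0, he₂def, sub_add_cancel]
      have hid : hfun z * ‖z‖ ^ ((n:ℝ)+s*q)
          = c₁ * ‖z‖^(q-1) + c₂ * ‖z‖^(((k+1:ℕ):ℝ)*(q-1)) := by
        calc hfun z * ‖z‖ ^ ((n:ℝ)+s*q)
            = c₁ * (‖z‖ ^ e₁ * ‖z‖ ^ ((n:ℝ)+s*q))
              + c₂ * (‖z‖ ^ e₂ * ‖z‖ ^ ((n:ℝ)+s*q)) := by rw [hfundef]; ring
          _ = c₁ * ‖z‖^(q-1) + c₂ * ‖z‖^(((k+1:ℕ):ℝ)*(q-1)) := by rw [hz_e1, hz_e2]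
      rw [hgz, le_div_iff₀ hpow0, neg_mul, hid]
      linarith
    · -- upper bound
      have hpow0 : (0:ℝ) < ‖z‖ ^ ((n:ℝ) + s*q) := Real.rpow_pos_of_pos hz0 _
      have hgz : g z = (Jq q (u xbar - u (xbar + z)) - Jq q (u ybar - u (ybar + z))) /
          ‖z‖ ^ ((n:ℝ)+s*q) := rfl
      have hA : |u xbar - u (xbar + z)| ≤ H := by
        have h1 := hHol xbar hxcb (xbar + z) hxz
        have hnorm : ‖xbar - (xbar + z)‖ = ‖z‖ := by
          rw [show xbar - (xbar + z) = -z by abel, norm_neg]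
        rw [hnorm] at h1
        have h2 : ‖z‖ ^ κ ≤ 1 := Real.rpow_le_one (norm_nonneg z) hz1 hκ0
        have h3 : H * ‖z‖ ^ κ ≤ H := by
          calc H * ‖z‖ ^ κ ≤ H * 1 := mul_le_mul_of_nonneg_left h2 hH.le
            _ = H := mul_one H
        exact h1.trans h3
      have hB : |u ybar - u (ybar + z)| ≤ H := by
        have h1 := hHol ybar hycb (ybar + z) hyz
        have hnorm : ‖ybar - (ybar + z)‖ = ‖z‖ := by
          rw [show ybar - (ybar + z) = -z by abel, norm_neg]
        rw [hnorm] at h1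
        have h2 : ‖z‖ ^ κ ≤ 1 := Real.rpow_le_one (norm_nonneg z) hz1 hκ0
        have h3 : H * ‖z‖ ^ κ ≤ H := by
          calc H * ‖z‖ ^ κ ≤ H * 1 := mul_le_mul_of_nonneg_left h2 hH.le
            _ = H := mul_one H
        exact h1.trans h3
      have hnum : |Jq q (u xbar - u (xbar + z)) - Jq q (u ybar - u (ybar + z))|
          ≤ 2 * H ^ (q-1) := by
        have h1 := abs_sub (Jq q (u xbar - u (xbar + z))) (Jq q (u ybar - u (ybar + z)))
        rw [Jq_abs hq1, Jq_abs hq1] at h1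
        have h2 : |u xbar - u (xbar + z)|^(q-1) ≤ H^(q-1) :=
          Real.rpow_le_rpow (abs_nonneg _) hA hq10
        have h3 : |u ybar - u (ybar + z)|^(q-1) ≤ H^(q-1) :=
          Real.rpow_le_rpow (abs_nonneg _) hB hq10
        linarith
      have hden : η ^ ((n:ℝ) + s*q) ≤ ‖z‖ ^ ((n:ℝ) + s*q) :=
        Real.rpow_le_rpow hη0.le hzη (by positivity)
      rw [hgz, abs_div, abs_of_pos hpow0]
      exact div_le_div₀ (by positivity) hnum (Real.rpow_pos_of_pos hη0 _) hden
  -- measurability and integrability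
  have hJqmeas : Measurable (Jq q) := (measurable_id.abs.pow_const _).mul measurable_id
  have hgmeas : Measurable g := by
    rw [hgdef]
    exact ((hJqmeas.comp (measurable_const.sub (hu.comp (measurable_id.const_add xbar)))).sub
      (hJqmeas.comp (measurable_const.sub (hu.comp (measurable_id.const_add ybar))))).div
      (measurable_norm.pow_const _)
  have hgi : IntegrableOn g D := by
    refine Integrable.mono' (g := fun _ => 2 * H ^ (q-1) / η ^ ((n:ℝ) + s*q))
      (integrableOn_const (hs := ?_) (hC := enorm_ne_top)) hgmeas.aestronglyMeasurable.restrict ?_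
    · exact ((measure_mono (fun z hz => (hDsub hz).1)).trans_lt measure_ball_lt_top).ne
    · refine (ae_restrict_iff' hD).2 (Filter.Eventually.of_forall fun z hz => ?_)
      rw [Real.norm_eq_abs]
      exact (hpoint z hz).2
  have hfunmeas : Measurable hfun := by
    rw [hfundef]
    exact ((measurable_norm.pow_const e₁).const_mul c₁).add
      ((measurable_norm.pow_const e₂).const_mul c₂)
  set Ann : Set (EuclideanSpace ℝ (Fin n)) :=
    ball (0 : EuclideanSpace ℝ (Fin n)) ρt \ ball (0 : EuclideanSpace ℝ (Fin n)) η with hAnndef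
  have hAnnm : MeasurableSet Ann := measurableSet_ball.diff measurableSet_ball
  have hfun0 : ∀ z, 0 ≤ hfun z := fun z =>
    add_nonneg (mul_nonneg hc₁0 (Real.rpow_nonneg (norm_nonneg z) _))
      (mul_nonneg hc₂0 (Real.rpow_nonneg (norm_nonneg z) _))
  have hhi : IntegrableOn hfun Ann := by
    refine Integrable.mono' (g := fun _ => c₁ * η ^ e₁ + c₂ * (η ^ e₂ + 1))
      (integrableOn_const (hs := ?_) (hC := enorm_ne_top)) hfunmeas.aestronglyMeasurable.restrict ?_
    · exact ((measure_mono Set.diff_subset).trans_lt measure_ball_lt_top).ne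
    · refine (ae_restrict_iff' hAnnm).2 (Filter.Eventually.of_forall fun z hz => ?_)
      obtain ⟨hz1, hz2⟩ := hz
      have hzη : η ≤ ‖z‖ := le_of_not_gt fun hlt => hz2 (mem_ball_zero_iff.2 hlt)
      have hzρ : ‖z‖ < ρt := mem_ball_zero_iff.1 hz1
      have hz0 : (0:ℝ) < ‖z‖ := lt_of_lt_of_le hη0 hzη
      rw [Real.norm_eq_abs, abs_of_nonneg (hfun0 z)]
      have hb1 : ‖z‖ ^ e₁ ≤ η ^ e₁ := by
        refine rpow_anti_base hη0 hzη ?_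
        rw [he₁def]
        have hsq0 : 0 < s*q := mul_pos hs0 (by linarith only [hq1])
        linarith only [hq11, hnR, hsq0]
      have hb2 : ‖z‖ ^ e₂ ≤ η ^ e₂ + 1 := by
        rcases le_or_gt e₂ 0 with he | he
        · have h1 := rpow_anti_base hη0 hzη he
          linarith
        · have h1 : ‖z‖ ^ e₂ ≤ 1 :=
            Real.rpow_le_one (norm_nonneg z) (by linarith) he.le
          have h2 : (0:ℝ) ≤ η ^ e₂ := (Real.rpow_pos_of_pos hη0 _).le
          linarith
      rw [hfundef]
      simp only
      have := mul_le_mul_of_nonneg_left hb1 hc₁0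
      have := mul_le_mul_of_nonneg_left hb2 hc₂0
      linarith
  have hhiD : IntegrableOn hfun D := hhi.mono_set hDsub
  have hI1 : ∫ z in D, -(hfun z) ≤ ∫ z in D, g z :=
    setIntegral_mono_on hhiD.neg hgi hD (fun z hz => (hpoint z hz).1)
  have hI2 : ∫ z in D, hfun z ≤ ∫ z in Ann, hfun z :=
    setIntegral_mono_set hhi (ae_of_all _ hfun0) (HasSubset.Subset.eventuallyLE hDsub)
  -- polar coordinates
  haveI : Nontrivial (EuclideanSpace ℝ (Fin n)) := by
    have h0 : 0 < Module.finrank ℝ (EuclideanSpace ℝ (Fin n)) := by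
      simp only [finrank_euclideanSpace, Fintype.card_fin]
      omega
    exact Module.nontrivial_of_finrank_pos h0
  set F : ℝ → ℝ := (Set.Ico η ρt).indicator (fun r => c₁ * r ^ e₁ + c₂ * r ^ e₂) with hFdef
  have hstep1 : ∀ z : EuclideanSpace ℝ (Fin n), Ann.indicator hfun z = F ‖z‖ := by
    intro z
    have hmem : z ∈ Ann ↔ ‖z‖ ∈ Set.Ico η ρt := by
      rw [hAnndef]
      constructor
      · rintro ⟨h1, h2⟩
        exact ⟨le_of_not_gt fun hlt => h2 (mem_ball_zero_iff.2 hlt), mem_ball_zero_iff.1 h1⟩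
      · rintro ⟨h1, h2⟩
        exact ⟨mem_ball_zero_iff.2 h2, fun hc => absurd (mem_ball_zero_iff.1 hc) (not_lt.2 h1)⟩
    by_cases hz : z ∈ Ann
    · rw [Set.indicator_of_mem hz, hFdef, Set.indicator_of_mem (hmem.1 hz)]
    · rw [Set.indicator_of_notMem hz, hFdef,
        Set.indicator_of_notMem (fun hc => hz (hmem.2 hc))]
  have hpolar1 : ∫ z in Ann, hfun z = ∫ z : EuclideanSpace ℝ (Fin n), F ‖z‖ := by
    rw [← integral_indicator hAnnm]
    exact integral_congr_ae (ae_of_all _ hstep1)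
  have hfrk : Module.finrank ℝ (EuclideanSpace ℝ (Fin n)) = n := by
    simp [finrank_euclideanSpace]
  have hpolar2 : (∫ z : EuclideanSpace ℝ (Fin n), F ‖z‖)
      = cdim * ∫ y in Set.Ioi (0:ℝ), y ^ (n-1) * F y := by
    rw [integral_fun_norm_addHaar volume F, hfrk, hcdimdef]
    simp only [nsmul_eq_mul, smul_eq_mul]
    rw [← mul_assoc]
    rfl
  have hpolar3 : (∫ y in Set.Ioi (0:ℝ), y ^ (n-1) * F y)
      = ∫ y in Set.Ico η ρt, y ^ (n-1) * (c₁ * y ^ e₁ + c₂ * y ^ e₂) := by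
    have hid : ∀ y : ℝ, y ^ (n-1) * F y =
        (Set.Ico η ρt).indicator (fun r => r ^ (n-1) * (c₁ * r ^ e₁ + c₂ * r ^ e₂)) y := by
      intro y
      rw [hFdef]
      by_cases hy : y ∈ Set.Ico η ρt
      · rw [Set.indicator_of_mem hy, Set.indicator_of_mem hy]
      · rw [Set.indicator_of_notMem hy, Set.indicator_of_notMem hy, mul_zero]
    simp_rw [hid]
    rw [setIntegral_indicator measurableSet_Ico,
      show Set.Ioi (0:ℝ) ∩ Set.Ico η ρt = Set.Ico η ρt from
        Set.inter_eq_self_of_subset_right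
          (fun y (hy : y ∈ Set.Ico η ρt) => lt_of_lt_of_le hη0 hy.1)]
  have hintE : ∀ e : ℝ, IntervalIntegrable (fun y : ℝ => y ^ e) volume η ρt :=
    fun e => intervalIntegral.intervalIntegrable_rpow
      (Or.inr (Set.notMem_uIcc_of_lt hη0 hρt0))
  have hIcoInt : ∀ e : ℝ, IntegrableOn (fun y : ℝ => y ^ e) (Set.Ico η ρt) := by
    intro e
    rw [integrableOn_Ico_iff_integrableOn_Ioo]
    exact (intervalIntegrable_iff_integrableOn_Ioo_of_le hηρt.le).1 (hintE e)
  have hIcoInterval : ∀ e : ℝ, (∫ y in Set.Ico η ρt, y ^ e) = ∫ y in η..ρt, y ^ e := by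
    intro e
    rw [intervalIntegral.integral_of_le hηρt.le, integral_Ico_eq_integral_Ioo,
      integral_Ioc_eq_integral_Ioo]
  have hpolar4 : (∫ y in Set.Ico η ρt, y ^ (n-1) * (c₁ * y ^ e₁ + c₂ * y ^ e₂))
      = c₁ * (∫ y in η..ρt, y ^ (q - s*q - 2))
        + c₂ * ∫ y in η..ρt, y ^ (((k+1:ℕ):ℝ)*(q-1) - s*q - 1) := by
    have hcong : Set.EqOn (fun y : ℝ => y ^ (n-1) * (c₁ * y^e₁ + c₂*y^e₂))
        (fun y : ℝ => c₁ * y ^ (q - s*q - 2)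
          + c₂ * y ^ (((k+1:ℕ):ℝ)*(q-1) - s*q - 1)) (Set.Ico η ρt) := by
      intro y hy
      have hy0 : 0 < y := lt_of_lt_of_le hη0 hy.1
      simp only
      rw [← Real.rpow_natCast y (n-1)]
      have hcast : ((n-1:ℕ):ℝ) = (n:ℝ) - 1 := by
        push_cast [Nat.cast_sub hn]
        ring
      rw [hcast]
      have hre : ∀ (c E : ℝ), y ^ ((n:ℝ)-1) * (c * y ^ E) = c * y ^ (((n:ℝ)-1) + E) := by
        intro c E; rw [Real.rpow_add hy0]; ring
      rw [mul_add, hre, hre, he₁def, he₂def,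
        show ((n:ℝ)-1) + ((q-1) - ((n:ℝ)+s*q)) = q - s*q - 2 from by ring,
        show ((n:ℝ)-1) + (((k+1:ℕ):ℝ)*(q-1) - ((n:ℝ)+s*q))
          = ((k+1:ℕ):ℝ)*(q-1) - s*q - 1 from by ring]
    rw [setIntegral_congr_fun measurableSet_Ico hcong]
    rw [integral_add ((hIcoInt _).const_mul c₁) ((hIcoInt _).const_mul c₂),
      integral_const_mul, integral_const_mul, hIcoInterval, hIcoInterval]
  have hI3 : (∫ r in η..ρt, r ^ (((k+1:ℕ):ℝ)*(q-1) - s*q - 1))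
      ≤ ∫ r in η..ρt, r ^ (2*(q-1) - s*q - 1) := by
    apply intervalIntegral.integral_mono_on hηρt.le (hintE _) (hintE _)
    intro x hx
    have hx0 : 0 < x := lt_of_lt_of_le hη0 hx.1
    have hx1 : x ≤ 1 := le_trans hx.2 (by linarith)
    refine Real.rpow_le_rpow_of_exponent_ge hx0 hx1 ?_
    have hp0 : (0:ℝ) ≤ (((k+1:ℕ):ℝ) - 2) * (q - 1) :=
      mul_nonneg (by linarith only [hmR]) hq10
    linarith only [hp0]
  have hIB0 : 0 ≤ ∫ r in η..ρt, r ^ (q - s*q - 2) :=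
    intervalIntegral.integral_nonneg hηρt.le
      (fun x hx => Real.rpow_nonneg (le_trans hη0.le hx.1) _)
  have hIA0 : 0 ≤ ∫ r in η..ρt, r ^ (2*(q-1) - s*q - 1) :=
    intervalIntegral.integral_nonneg hηρt.le
      (fun x hx => Real.rpow_nonneg (le_trans hη0.le hx.1) _)
  have hI20 : 0 ≤ ∫ r in η..ρt, r ^ (((k+1:ℕ):ℝ)*(q-1) - s*q - 1) :=
    intervalIntegral.integral_nonneg hηρt.le
      (fun x hx => Real.rpow_nonneg (le_trans hη0.le hx.1) _)
  refine ⟨hgi, ?_⟩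
  have hval : ∫ z in Ann, hfun z
      = cdim * (c₁ * (∫ y in η..ρt, y ^ (q - s*q - 2))
        + c₂ * ∫ y in η..ρt, y ^ (((k+1:ℕ):ℝ)*(q-1) - s*q - 1)) := by
    rw [hpolar1, hpolar2, hpolar3, hpolar4]
  have hfin : cdim * (c₁ * (∫ y in η..ρt, y ^ (q - s*q - 2))
        + c₂ * ∫ y in η..ρt, y ^ (((k+1:ℕ):ℝ)*(q-1) - s*q - 1))
      ≤ κs * ((∫ r in η..ρt, r ^ (2*(q-1) - s*q - 1))
        + na ^ βq * ∫ r in η..ρt, r ^ (q - s*q - 2)) := by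
    have e2 : cdim * (2*A₁^(q-1)) ≤ κs := by
      rw [hκsdef]
      linarith only [mul_nonneg hcdim0 hc₂0]
    have e3 : cdim * (2*A₂^(q-1)) ≤ κs := by
      rw [hκsdef]
      have hcc : cdim * c₂ = cdim * (2*A₂^(q-1)) := by rw [hc₂def]
      linarith only [mul_nonneg hcdim0 hrp1, hcc]
    have key1 : cdim * (c₁ * (∫ y in η..ρt, y ^ (q - s*q - 2)))
        ≤ κs * (na ^ βq * ∫ r in η..ρt, r ^ (q - s*q - 2)) := by
      rw [hc₁def]
      calc cdim * (2 * A₁^(q-1) * na^βq * ∫ y in η..ρt, y ^ (q - s*q - 2))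
          = (cdim * (2*A₁^(q-1))) * (na^βq * ∫ y in η..ρt, y ^ (q - s*q - 2)) := by ring
        _ ≤ κs * (na^βq * ∫ y in η..ρt, y ^ (q - s*q - 2)) :=
            mul_le_mul_of_nonneg_right e2 (mul_nonneg hbq0 hIB0)
    have key2 : cdim * (c₂ * ∫ y in η..ρt, y ^ (((k+1:ℕ):ℝ)*(q-1) - s*q - 1))
        ≤ κs * ∫ r in η..ρt, r ^ (2*(q-1) - s*q - 1) := by
      rw [hc₂def]
      calc cdim * (2 * A₂^(q-1) * ∫ y in η..ρt, y ^ (((k+1:ℕ):ℝ)*(q-1) - s*q - 1))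
          = (cdim * (2*A₂^(q-1))) * ∫ y in η..ρt, y ^ (((k+1:ℕ):ℝ)*(q-1) - s*q - 1) := by
            ring
        _ ≤ (cdim * (2*A₂^(q-1))) * ∫ r in η..ρt, r ^ (2*(q-1) - s*q - 1) := by
            have h0 : 0 ≤ cdim * (2*A₂^(q-1)) :=
              mul_nonneg hcdim0 (by linarith only [hrp2])
            exact mul_le_mul_of_nonneg_left hI3 h0
        _ ≤ κs * ∫ r in η..ρt, r ^ (2*(q-1) - s*q - 1) :=
            mul_le_mul_of_nonneg_right e3 hIA0
    linarith only [key1, key2]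
  calc -(κs * ((∫ r in η..ρt, r ^ (2*(q-1) - s*q - 1))
        + na ^ βq * ∫ r in η..ρt, r ^ (q - s*q - 2)))
      ≤ -(cdim * (c₁ * (∫ y in η..ρt, y ^ (q - s*q - 2))
        + c₂ * ∫ y in η..ρt, y ^ (((k+1:ℕ):ℝ)*(q-1) - s*q - 1))) := neg_le_neg hfin
    _ = -(∫ z in Ann, hfun z) := by rw [hval]
    _ ≤ -(∫ z in D, hfun z) := neg_le_neg hI2
    _ = ∫ z in D, -(hfun z) := (integral_neg _).symm
    _ ≤ ∫ z in D, g z := hI1
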